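/- Fix μ ∈ Δ(S) and a nonempty finite message set M. (i) For every signal π (a family π(·|s) ∈ Δ(M), s ∈ S), setting p(m) = Σ_{s∈S} π(m|s) μ(s) and, when p(m) > 0, ν_{m,π}(s) = π(m|s) μ(s) / p(m), the measure τ_π = Σ_{m : p(m) > 0} p(m) δ_{ν_{m,π}} is a Borel probability measure on Δ(S) with barycenter μ and support of cardinality at most |M|. (ii) Conversely, if μ(s) > 0 for all s ∈ S, then for every Borel probability measure τ on Δ(S) with barycenter μ and support of at most |M| points, there exists a signal π such that τ = τ_π. -/

import Mathlib

open MeasureTheory Finset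

noncomputable section

/-- Expected utility `Σ_s u(s,a) ν(s)` of action `a` under belief `ν ∈ Δ(S)`. -/
def expUtil {S α : Type*} [Fintype S] (u : S → α → ℝ) (ν : stdSimplex ℝ S) (a : α) : ℝ :=
  ∑ s, u s a * (ν : S → ℝ) s

/-- Admissible (optimal) actions `A*(ν) = argmax_a Σ_s u(s,a) ν(s)`. -/
def admissible {S α : Type*} [Fintype S] (u : S → α → ℝ) (ν : stdSimplex ℝ S) : Set α :=
  {a | ∀ b, expUtil u ν b ≤ expUtil u ν a}

/-- `p(m) = Σ_s π(m|s) μ(s)`, the total probability of message `m` under signal `π` and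
prior `μ`. -/
def msgProb {S M : Type*} [Fintype S] (π : S → M → ℝ) (μ : stdSimplex ℝ S) (m : M) : ℝ :=
  ∑ s, π s m * (μ : S → ℝ) s

/-- The measure `τ_π = Σ_{m : p(m) > 0} p(m) δ_{ν_m}` on `Δ(S)` induced by a signal `π`,
where `ν m` is the posterior of message `m`. -/
def signalMeasure {S M : Type*} [Fintype S] [Fintype M] (π : S → M → ℝ)
    (μ : stdSimplex ℝ S) (ν : M → stdSimplex ℝ S) : Measure (stdSimplex ℝ S) :=
  ∑ m ∈ Finset.univ.filter (fun m => 0 < msgProb π μ m),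
    ENNReal.ofReal (msgProb π μ m) • Measure.dirac (ν m)

lemma coord_meas {S : Type*} [Fintype S] (s : S) :
    Measurable (fun ρ : stdSimplex ℝ S => (ρ : S → ℝ) s) :=
  ((continuous_apply s).comp continuous_subtype_val).measurable

lemma coord_integrable_dirac {S : Type*} [Fintype S] (a : stdSimplex ℝ S) (s : S) :
    Integrable (fun ρ : stdSimplex ℝ S => (ρ : S → ℝ) s) (Measure.dirac a) := by
  refine ⟨(coord_meas s).aestronglyMeasurable, ?_⟩
  simp [HasFiniteIntegral, lintegral_dirac]

lemma integral_finsum_dirac {S ι : Type*} [Fintype S] (G : Finset ι) (c : ι → ℝ)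
    (hc : ∀ i ∈ G, 0 ≤ c i) (x : ι → stdSimplex ℝ S) (s : S) :
    (∫ ρ, (ρ : S → ℝ) s ∂(∑ i ∈ G, ENNReal.ofReal (c i) • Measure.dirac (x i)))
      = ∑ i ∈ G, c i * ((x i : S → ℝ) s) := by
  rw [integral_finset_sum_measure (fun i _ =>
    (coord_integrable_dirac (x i) s).smul_measure ENNReal.ofReal_ne_top)]
  refine Finset.sum_congr rfl fun i hi => ?_
  rw [integral_smul_measure, integral_dirac, ENNReal.toReal_ofReal (hc i hi), smul_eq_mul]

lemma finsum_dirac_apply {S ι : Type*} [Fintype S] (G : Finset ι) (c : ι → ℝ)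
    (x : ι → stdSimplex ℝ S) (A : Set (stdSimplex ℝ S)) :
    (∑ i ∈ G, ENNReal.ofReal (c i) • Measure.dirac (x i)) A
      = ∑ i ∈ G, ENNReal.ofReal (c i) * Measure.dirac (x i) A := by
  rw [Measure.finset_sum_apply]
  simp [Measure.smul_apply]

lemma measure_finset_eq_sum {α : Type*} [MeasurableSpace α] [MeasurableSingletonClass α]
    (μ : Measure α) (F : Finset α) : μ (↑F) = ∑ x ∈ F, μ {x} := by
  have h : (↑F : Set α) = ⋃ x ∈ F, {x} := by ext y; simp
  rw [h, measure_biUnion_finset ?_ (fun b _ => measurableSet_singleton b)]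
  intro a _ b _ hab
  simp [Function.onFun, Set.disjoint_singleton, hab]

lemma sum_eq_range {M β γ : Type*} [Fintype M] [Fintype γ] [AddCommMonoid β] [DecidableEq M]
    (g : γ ↪ M) (k : M → β) (hk : ∀ m, (¬ ∃ x : γ, g x = m) → k m = 0) :
    ∑ m, k m = ∑ x, k (g x) := by
  rw [← Finset.sum_image (f := k) (g := fun x : γ => g x) (s := Finset.univ)
    (fun a _ b _ h => g.injective h)]
  refine (Finset.sum_subset (Finset.subset_univ _) fun m _ hm => hk m fun ⟨x, hx⟩ => hm ?_).symm
  exact Finset.mem_image.2 ⟨x, Finset.mem_univ x, hx⟩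

/-- (i) For every signal `π` (a family `π(·|s) ∈ Δ(M)`), with posteriors
`ν_{m,π}(s) = π(m|s)μ(s)/p(m)` (for `p(m) > 0`), the measure
`τ_π = Σ_{m : p(m)>0} p(m) δ_{ν_{m,π}}` is a Borel probability measure on `Δ(S)` with
barycenter `μ` and support of cardinality at most `|M|`.
(ii) Conversely, if `μ` has full support, every Borel probability measure on `Δ(S)` with
barycenter `μ` supported on at most `|M|` points is of the form `τ_π` for some signal `π`. -/
theorem signal_measure_correspondence {S M : Type*} [Fintype S] [Nonempty S]
    [Fintype M] [Nonempty M] (μ : stdSimplex ℝ S) :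
    (∀ π : S → M → ℝ, (∀ s, π s ∈ stdSimplex ℝ M) →
      ∀ ν : M → stdSimplex ℝ S,
        (∀ m, 0 < msgProb π μ m →
          ∀ s, (ν m : S → ℝ) s * msgProb π μ m = π s m * (μ : S → ℝ) s) →
        IsProbabilityMeasure (signalMeasure π μ ν) ∧
        (∀ s, (∫ ρ, (ρ : S → ℝ) s ∂(signalMeasure π μ ν)) = (μ : S → ℝ) s) ∧
        ∃ F : Finset (stdSimplex ℝ S), F.card ≤ Fintype.card M ∧
          signalMeasure π μ ν (↑F) = 1) ∧
    ((∀ s, 0 < (μ : S → ℝ) s) →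
      ∀ τ : ProbabilityMeasure (stdSimplex ℝ S),
        (∀ s, (∫ ρ, (ρ : S → ℝ) s ∂(τ : Measure (stdSimplex ℝ S))) = (μ : S → ℝ) s) →
        (∃ F : Finset (stdSimplex ℝ S), F.card ≤ Fintype.card M ∧
          (τ : Measure (stdSimplex ℝ S)) (↑F) = 1) →
        ∃ π : S → M → ℝ, (∀ s, π s ∈ stdSimplex ℝ M) ∧
          ∃ ν : M → stdSimplex ℝ S,
            (∀ m, 0 < msgProb π μ m →
              ∀ s, (ν m : S → ℝ) s * msgProb π μ m = π s m * (μ : S → ℝ) s) ∧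
            (τ : Measure (stdSimplex ℝ S)) = signalMeasure π μ ν) := by
  classical
  constructor
  · -- Part (i)
    intro π hπ ν hν
    set P := Finset.univ.filter (fun m => 0 < msgProb π μ m) with hP
    have hp0 : ∀ m, 0 ≤ msgProb π μ m := fun m =>
      Finset.sum_nonneg fun s _ => mul_nonneg ((hπ s).1 m) (μ.2.1 s)
    have hterm0 : ∀ m ∉ P, msgProb π μ m = 0 := by
      intro m hm
      have : ¬ 0 < msgProb π μ m := by simpa [hP] using hm
      linarith [hp0 m]
    have sumP : ∑ m ∈ P, msgProb π μ m = 1 := by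
      rw [Finset.sum_subset (Finset.subset_univ P) (fun m _ hm => hterm0 m hm)]
      unfold msgProb
      rw [Finset.sum_comm]
      have : ∀ s : S, ∑ m : M, π s m * (μ : S → ℝ) s = (μ : S → ℝ) s := by
        intro s
        rw [← Finset.sum_mul, (hπ s).2, one_mul]
      simp_rw [this]
      exact μ.2.2
    refine ⟨⟨?_⟩, ?_, ?_⟩
    · -- probability measure
      rw [signalMeasure, finsum_dirac_apply]
      simp only [measure_univ, mul_one]
      rw [← ENNReal.ofReal_sum_of_nonneg (fun m _ => hp0 m)]
      rw [sumP, ENNReal.ofReal_one]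
    · -- barycenter
      intro s
      rw [signalMeasure, integral_finsum_dirac _ _ (fun m _ => hp0 m)]
      have h1 : ∑ m ∈ P, msgProb π μ m * (ν m : S → ℝ) s
          = ∑ m ∈ P, π s m * (μ : S → ℝ) s := by
        refine Finset.sum_congr rfl fun m hm => ?_
        have hm' : 0 < msgProb π μ m := by simpa [hP] using hm
        rw [mul_comm, hν m hm' s]
      rw [h1]
      have h2 : ∀ m ∉ P, π s m * (μ : S → ℝ) s = 0 := by
        intro m hm
        have h0 : msgProb π μ m = 0 := hterm0 m hm
        have := (Finset.sum_eq_zero_iff_of_nonneg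
          (fun t _ => mul_nonneg ((hπ t).1 m) (μ.2.1 t))).1 h0 s (Finset.mem_univ s)
        exact this
      rw [Finset.sum_subset (Finset.subset_univ P) (fun m _ hm => h2 m hm),
        ← Finset.sum_mul, (hπ s).2, one_mul]
    · -- finite support
      refine ⟨P.image ν, le_trans (Finset.card_image_le)
        (le_trans (Finset.card_filter_le _ _) (by simp)), ?_⟩
      rw [signalMeasure, finsum_dirac_apply]
      have : ∀ m ∈ P, Measure.dirac (ν m) (↑(P.image ν) : Set (stdSimplex ℝ S)) = 1 := by
        intro m hm
        rw [Measure.dirac_apply' _ (P.image ν).measurableSet]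
        have : ν m ∈ (↑(P.image ν) : Set (stdSimplex ℝ S)) := by
          simp only [Finset.coe_image, Set.mem_image]
          exact ⟨m, by simpa [hP] using hm, rfl⟩
        rw [Set.indicator_of_mem this, Pi.one_apply]
      rw [Finset.sum_congr rfl (fun m hm => by rw [this m hm, mul_one])]
      rw [← ENNReal.ofReal_sum_of_nonneg (fun m _ => hp0 m), sumP, ENNReal.ofReal_one]
  · -- Part (ii)
    intro hfull τ hbar ⟨F, hFcard, hF1⟩
    set τ' := (τ : Measure (stdSimplex ℝ S)) with hτ'
    obtain ⟨g⟩ : Nonempty (↥F ↪ M) :=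
      Function.Embedding.nonempty_iff_card_le.2 (by rw [Fintype.card_coe]; exact hFcard)
    set w : stdSimplex ℝ S → ℝ := fun x => (τ' {x}).toReal with hw
    set q : M → ℝ := fun m => if h : ∃ x : ↥F, g x = m then w ↑h.choose else 0 with hq
    set e : M → stdSimplex ℝ S := fun m => if h : ∃ x : ↥F, g x = m then ↑h.choose else μ
      with he
    have hw0 : ∀ x, 0 ≤ w x := fun x => ENNReal.toReal_nonneg
    have hq_g : ∀ x : ↥F, q (g x) = w ↑x := by
      intro x
      have h : ∃ y : ↥F, g y = g x := ⟨x, rfl⟩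
      simp only [hq, dif_pos h]
      rw [g.injective h.choose_spec]
    have he_g : ∀ x : ↥F, e (g x) = ↑x := by
      intro x
      have h : ∃ y : ↥F, g y = g x := ⟨x, rfl⟩
      simp only [he, dif_pos h]
      rw [g.injective h.choose_spec]
    have hq_zero : ∀ m, (¬ ∃ x : ↥F, g x = m) → q m = 0 := by
      intro m h; simp only [hq, dif_neg h]
    have hq0 : ∀ m, 0 ≤ q m := by
      intro m
      by_cases h : ∃ x : ↥F, g x = m
      · simp only [hq, dif_pos h]; exact hw0 _
      · simp [hq_zero m h]
    -- τ' as a sum of point masses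
    have hτeq : τ' = ∑ x ∈ F, ENNReal.ofReal (w x) • Measure.dirac x := by
      ext A hA
      have hcompl : τ' ((↑F : Set (stdSimplex ℝ S))ᶜ) = 0 := by
        rw [measure_compl F.measurableSet (measure_ne_top _ _), hF1]
        simp
      have hdiff : τ' (A \ ↑F) = 0 :=
        le_antisymm (le_trans (measure_mono (Set.diff_subset_compl A ↑F)) hcompl.le)
          (zero_le)
      have hsplit : τ' A = τ' (A ∩ ↑F) := by
        rw [← measure_inter_add_diff A F.measurableSet, hdiff, add_zero]
      have hinter : A ∩ (↑F : Set (stdSimplex ℝ S)) = ↑(F.filter (· ∈ A)) := by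
        ext y; simp [and_comm]
      rw [hsplit, hinter, measure_finset_eq_sum]
      rw [finsum_dirac_apply]
      have : ∀ x ∈ F, ENNReal.ofReal (w x) * Measure.dirac x A
          = if x ∈ A then τ' {x} else 0 := by
        intro x _
        rw [Measure.dirac_apply' _ hA, hw]
        rw [ENNReal.ofReal_toReal (measure_ne_top _ _)]
        by_cases hxA : x ∈ A
        · rw [Set.indicator_of_mem hxA, Pi.one_apply, mul_one, if_pos hxA]
        · rw [Set.indicator_of_notMem hxA, mul_zero, if_neg hxA]
      rw [Finset.sum_congr rfl this, Finset.sum_filter]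
    -- barycenter in sum form
    have hbar' : ∀ s, ∑ x ∈ F, w x * (x : S → ℝ) s = (μ : S → ℝ) s := by
      intro s
      rw [← hbar s, hτeq]
      exact (integral_finsum_dirac F w (fun x _ => hw0 x) (fun y => y) s).symm
    -- reindexing : sums over M reduce to sums over F
    have hcoord : ∀ s, ∑ m, q m * (e m : S → ℝ) s = (μ : S → ℝ) s := by
      intro s
      rw [sum_eq_range g (fun m => q m * (e m : S → ℝ) s)
        (fun m h => by simp [hq_zero m h])]
      have : ∀ x : ↥F, q (g x) * (e (g x) : S → ℝ) s = w ↑x * ((x : stdSimplex ℝ S) : S → ℝ) s := by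
        intro x; rw [hq_g, he_g]
      rw [Finset.sum_congr rfl (fun x _ => this x)]
      rw [← hbar' s, Finset.univ_eq_attach, Finset.sum_attach F
        (fun y => w y * (y : S → ℝ) s)]
    -- definition of the signal
    refine ⟨fun s m => q m * (e m : S → ℝ) s / (μ : S → ℝ) s, ?_, e, ?_, ?_⟩
    · intro s
      refine ⟨fun m => div_nonneg (mul_nonneg (hq0 m) ((e m).2.1 s)) (hfull s).le, ?_⟩
      rw [← Finset.sum_div, hcoord s, div_self (hfull s).ne']
    · -- the posterior identity
      intro m _ s
      have hpq : msgProb (fun s m => q m * (e m : S → ℝ) s / (μ : S → ℝ) s) μ m = q m := by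
        unfold msgProb
        have : ∀ s : S, q m * (e m : S → ℝ) s / (μ : S → ℝ) s * (μ : S → ℝ) s
            = q m * (e m : S → ℝ) s := fun s => div_mul_cancel₀ _ (hfull s).ne'
        rw [Finset.sum_congr rfl (fun s _ => this s), ← Finset.mul_sum]
        exact (congrArg (fun t => q m * t) (e m).2.2).trans (mul_one _)
      rw [hpq, div_mul_cancel₀ _ (hfull s).ne', mul_comm]
    · -- the measure identity
      have hpq : msgProb (fun s m => q m * (e m : S → ℝ) s / (μ : S → ℝ) s) μ = q := by
        funext m
        unfold msgProb
        have : ∀ s : S, q m * (e m : S → ℝ) s / (μ : S → ℝ) s * (μ : S → ℝ) s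
            = q m * (e m : S → ℝ) s := fun s => div_mul_cancel₀ _ (hfull s).ne'
        rw [Finset.sum_congr rfl (fun s _ => this s), ← Finset.mul_sum]
        exact (congrArg (fun t => q m * t) (e m).2.2).trans (mul_one _)
      rw [hτeq, signalMeasure, hpq]
      have hstep1 : ∑ m ∈ Finset.univ.filter (fun m => 0 < q m),
          ENNReal.ofReal (q m) • Measure.dirac (e m)
          = ∑ m, ENNReal.ofReal (q m) • Measure.dirac (e m) := by
        refine Finset.sum_subset (Finset.filter_subset _ _) fun m _ hm => ?_
        have : q m = 0 := by
          have : ¬ 0 < q m := by simpa using hm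
          linarith [hq0 m]
        simp [this]
      rw [hstep1, sum_eq_range g (fun m => ENNReal.ofReal (q m) • Measure.dirac (e m))
        (fun m h => by simp [hq_zero m h])]
      have : ∀ x : ↥F, ENNReal.ofReal (q (g x)) • Measure.dirac (e (g x))
          = ENNReal.ofReal (w ↑x) • Measure.dirac (↑x : stdSimplex ℝ S) := by
        intro x; rw [hq_g, he_g]
      rw [Finset.sum_congr rfl (fun x _ => this x), Finset.univ_eq_attach,
        Finset.sum_attach F (fun y => ENNReal.ofReal (w y) • Measure.dirac y)]
end
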